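/- For every λ > 0, ∫₀^∞ e^{−x} ∏_{i=1}^∞ (1 − e^{−x−λi})² dx < ((1 − e^{−λ})/(2e^{−λ})) · (1 − exp(−2e^{−λ}/(1 − e^{−λ}))). -/

import Mathlib

open Real MeasureTheory Set Filter Topology

/-- Pointwise strict bound on the infinite product. -/
lemma aux_tprod_lt (l x : ℝ) (hl : 0 < l) (hx : 0 < x) :
    (∏' i : ℕ, (1 - Real.exp (-x - l * ((i : ℝ) + 1))) ^ 2)
      < Real.exp (-(2 * Real.exp (-l) / (1 - Real.exp (-l))) * Real.exp (-x)) := by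
  set q : ℝ := Real.exp (-l) with hqdef
  have hq0 : 0 < q := Real.exp_pos _
  have hq1 : q < 1 := by
    rw [hqdef]
    have : -l < 0 := by linarith
    calc Real.exp (-l) < Real.exp 0 := Real.exp_lt_exp.2 this
      _ = 1 := Real.exp_zero
  set a : ℕ → ℝ := fun i => Real.exp (-x - l * ((i : ℝ) + 1)) with hadef
  have ha_pos : ∀ i, 0 < a i := fun i => Real.exp_pos _
  have ha_le_q : ∀ i, a i ≤ q := by
    intro i
    rw [hadef, hqdef]
    apply Real.exp_le_exp.2
    have h1 : (0 : ℝ) ≤ (i : ℝ) := Nat.cast_nonneg i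
    nlinarith
  have ha_lt1 : ∀ i, a i < 1 := fun i => lt_of_le_of_lt (ha_le_q i) hq1
  have hgeo : ∀ i : ℕ, a i = Real.exp (-x - l) * q ^ i := by
    intro i
    rw [hadef, hqdef, ← Real.exp_nat_mul, ← Real.exp_add]
    ring_nf
  have hsum_a : Summable a := by
    rw [show a = fun i => Real.exp (-x - l) * q ^ i from funext hgeo]
    exact (summable_geometric_of_lt_one hq0.le hq1).mul_left _
  have htsum_a : ∑' i, a i = Real.exp (-x) * q / (1 - q) := by
    rw [show a = fun i => Real.exp (-x - l) * q ^ i from funext hgeo,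
      tsum_mul_left, tsum_geometric_of_lt_one hq0.le hq1, hqdef, ← Real.exp_add]
    field_simp
    ring_nf
  -- summability of logs
  have hL : Summable fun i => -Real.log (1 - a i) := by
    apply Summable.of_nonneg_of_le (fun i => ?_) (fun i => ?_)
      (hsum_a.mul_right (1 - q)⁻¹)
    · rw [neg_nonneg]
      exact Real.log_nonpos (by linarith [ha_lt1 i]) (by linarith [ha_pos i])
    · have h1 : 0 < 1 - a i := by linarith [ha_lt1 i]
      have h2 : 0 < 1 - q := by linarith
      have h3 : -Real.log (1 - a i) = Real.log (1 - a i)⁻¹ := (Real.log_inv _).symm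
      rw [h3]
      have h4 : Real.log (1 - a i)⁻¹ ≤ (1 - a i)⁻¹ - 1 :=
        Real.log_le_sub_one_of_pos (by positivity)
      have h5 : (1 - a i)⁻¹ - 1 = a i / (1 - a i) := by field_simp; ring
      have h6 : a i / (1 - a i) ≤ a i * (1 - q)⁻¹ := by
        rw [div_eq_mul_inv]
        apply mul_le_mul_of_nonneg_left _ (ha_pos i).le
        apply inv_anti₀ h2
        linarith [ha_le_q i]
      linarith
  have hlog_sum : Summable fun i => Real.log (1 - a i) := by
    have := hL.neg
    simpa using this
  -- strict sum inequality
  have hS : ∑' i, Real.log (1 - a i) < ∑' i, -(a i) := by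
    have hle : ∀ i, Real.log (1 - a i) ≤ -(a i) := by
      intro i
      have h1 : 0 < 1 - a i := by linarith [ha_lt1 i]
      have := Real.log_le_sub_one_of_pos h1
      linarith
    have h0 : Real.log (1 - a 0) < -(a 0) := by
      have h1 : 0 < 1 - a 0 := by linarith [ha_lt1 0]
      have h2 : (1 : ℝ) - a 0 ≠ 1 := by have := ha_pos 0; intro h; linarith [sub_eq_self.mp h]
      have := Real.log_lt_sub_one_of_pos h1 h2
      linarith
    exact Summable.tsum_lt_tsum hle h0 hlog_sum hsum_a.neg
  -- tprod = exp of sum of logs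
  have hsq_pos : ∀ (u : Unit) (i : ℕ), 0 < (fun (i : ℕ) (_ : Unit) => (1 - a i) ^ 2) i u := by
    intro u i
    have h1 : 0 < 1 - a i := by linarith [ha_lt1 i]
    positivity
  have hsq_logsum : ∀ u : Unit,
      Summable fun i : ℕ => Real.log ((fun (i : ℕ) (_ : Unit) => (1 - a i) ^ 2) i u) := by
    intro u
    simp only [Real.log_pow]
    push_cast
    exact (hlog_sum.mul_left 2)
  have hP := Real.rexp_tsum_eq_tprod (f := fun (i : ℕ) => (1 - a i) ^ 2)
    (fun i => hsq_pos () i) (hsq_logsum ())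
  have hP' : (∏' i : ℕ, (1 - a i) ^ 2) = Real.exp (∑' i, Real.log ((1 - a i) ^ 2)) := hP.symm
  have hlogsq : (∑' i, Real.log ((1 - a i) ^ 2)) = 2 * ∑' i, Real.log (1 - a i) := by
    rw [← tsum_mul_left]
    apply tsum_congr
    intro i
    rw [Real.log_pow]
    push_cast
    ring
  -- conclude
  have hgoal : (∏' i : ℕ, (1 - a i) ^ 2)
      < Real.exp (-(2 * q / (1 - q)) * Real.exp (-x)) := by
    rw [hP', hlogsq]
    apply Real.exp_lt_exp.2
    have h1 : ∑' i, -(a i) = -(∑' i, a i) := tsum_neg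
    have h2 : -(2 * q / (1 - q)) * Real.exp (-x) = 2 * (-(∑' i, a i)) := by
      rw [htsum_a]
      field_simp
    rw [h2]
    have := hS
    rw [h1] at this
    linarith
  exact hgoal

/-- Upper bound for the integral `∫₀^∞ e^{-x} ∏_{i=1}^∞ (1 - e^{-x-λi})² dx`. -/
theorem integral_prod_upper_bound (l : ℝ) (hl : 0 < l) :
    (∫ x in Set.Ioi (0 : ℝ),
        Real.exp (-x) * ∏' i : ℕ, (1 - Real.exp (-x - l * ((i : ℝ) + 1))) ^ 2)
      < (1 - Real.exp (-l)) / (2 * Real.exp (-l)) *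
          (1 - Real.exp (-2 * Real.exp (-l) / (1 - Real.exp (-l)))) := by
  set q : ℝ := Real.exp (-l) with hqdef
  have hq0 : 0 < q := Real.exp_pos _
  have hq1 : q < 1 := by
    rw [hqdef]
    calc Real.exp (-l) < Real.exp 0 := Real.exp_lt_exp.2 (by linarith)
      _ = 1 := Real.exp_zero
  set c : ℝ := 2 * q / (1 - q) with hcdef
  have hc0 : 0 < c := by
    apply div_pos (by linarith) (by linarith)
  set g : ℝ → ℝ := fun x => Real.exp (-x) * Real.exp (-c * Real.exp (-x)) with hgdef
  set F : ℝ → ℝ := fun x => Real.exp (-c * Real.exp (-x)) / c with hFdef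
  have hderiv : ∀ x ∈ Ici (0 : ℝ), HasDerivAt F (g x) x := by
    intro x _
    have h1 : HasDerivAt (fun y : ℝ => -y) (-1) x := (hasDerivAt_id x).neg
    have h2 : HasDerivAt (fun y : ℝ => Real.exp (-y)) (Real.exp (-x) * (-1)) x :=
      (Real.hasDerivAt_exp (-x)).comp x h1
    have h3 : HasDerivAt (fun y : ℝ => -c * Real.exp (-y))
        (-c * (Real.exp (-x) * (-1))) x := h2.const_mul (-c)
    have h4 : HasDerivAt (fun y : ℝ => Real.exp (-c * Real.exp (-y)))
        (Real.exp (-c * Real.exp (-x)) * (-c * (Real.exp (-x) * (-1)))) x :=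
      (Real.hasDerivAt_exp _).comp x h3
    have h5 := h4.div_const c
    refine h5.congr_deriv ?_
    rw [hgdef]
    field_simp
  have hgnonneg : ∀ x ∈ Ioi (0 : ℝ), 0 ≤ g x := by
    intro x _
    rw [hgdef]
    positivity
  have hF_tendsto : Tendsto F atTop (𝓝 (1 / c)) := by
    have h0 : Tendsto (fun x : ℝ => Real.exp (-x)) atTop (𝓝 0) :=
      Real.tendsto_exp_neg_atTop_nhds_zero
    have h1 : Tendsto (fun x : ℝ => -c * Real.exp (-x)) atTop (𝓝 (-c * 0)) :=
      h0.const_mul (-c)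
    rw [mul_zero] at h1
    have h2 : Tendsto (fun x : ℝ => Real.exp (-c * Real.exp (-x))) atTop (𝓝 (Real.exp 0)) :=
      (Real.continuous_exp.tendsto 0).comp h1
    rw [Real.exp_zero] at h2
    have h3 := h2.div_const c
    simpa [hFdef, one_div] using h3
  have hg_int : IntegrableOn g (Ioi 0) volume :=
    integrableOn_Ioi_deriv_of_nonneg' hderiv hgnonneg hF_tendsto
  have hg_val : ∫ x in Ioi (0 : ℝ), g x = 1 / c - Real.exp (-c) / c := by
    rw [integral_Ioi_of_hasDerivAt_of_nonneg' hderiv hgnonneg hF_tendsto]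
    rw [hFdef]
    norm_num
  have hRHS : (1 - q) / (2 * q) * (1 - Real.exp (-2 * q / (1 - q)))
      = ∫ x in Ioi (0 : ℝ), g x := by
    have hne : -2 * q / (1 - q) = -c := by rw [hcdef]; ring
    have h1c : 1 / c = (1 - q) / (2 * q) := by rw [hcdef, one_div_div]
    rw [hg_val, hne,
      show (1 : ℝ) / c - Real.exp (-c) / c = (1 - Real.exp (-c)) * (1 / c) by ring, h1c]
    ring
  rw [hRHS]
  -- pointwise comparison
  have hfg : ∀ x ∈ Ioi (0 : ℝ),
      Real.exp (-x) * (∏' i : ℕ, (1 - Real.exp (-x - l * ((i : ℝ) + 1))) ^ 2) < g x := by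
    intro x hx
    have h := aux_tprod_lt l x hl hx
    simp only [hgdef]
    have hcq : -c * Real.exp (-x) = -(2 * Real.exp (-l) / (1 - Real.exp (-l))) * Real.exp (-x) := by
      rw [hcdef, hqdef]
    rw [hcq]
    exact mul_lt_mul_of_pos_left h (Real.exp_pos (-x))
  by_cases hint : IntegrableOn
      (fun x => Real.exp (-x) * ∏' i : ℕ, (1 - Real.exp (-x - l * ((i : ℝ) + 1))) ^ 2)
      (Ioi (0 : ℝ)) volume
  · have hsub : IntegrableOn
        (fun x => g x - Real.exp (-x) * ∏' i : ℕ, (1 - Real.exp (-x - l * ((i : ℝ) + 1))) ^ 2)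
        (Ioi (0 : ℝ)) volume := hg_int.sub hint
    have hpos : 0 < ∫ x in Ioi (0 : ℝ),
        (g x - Real.exp (-x) * ∏' i : ℕ, (1 - Real.exp (-x - l * ((i : ℝ) + 1))) ^ 2) := by
      rw [setIntegral_pos_iff_support_of_nonneg_ae _ hsub]
      · apply lt_of_lt_of_le _ (measure_mono (Set.subset_inter (fun x hx => ?_) subset_rfl))
        · exact (isOpen_Ioi).measure_pos volume (nonempty_Ioi)
        · exact ne_of_gt (sub_pos.2 (hfg x hx))
      · filter_upwards [ae_restrict_mem measurableSet_Ioi] with x hx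
        exact le_of_lt (sub_pos.2 (hfg x hx))
    rw [integral_sub hg_int hint] at hpos
    linarith
  · rw [integral_undef hint, hg_val]
    have he : Real.exp (-c) < 1 := by
      calc Real.exp (-c) < Real.exp 0 := Real.exp_lt_exp.2 (by linarith)
        _ = 1 := Real.exp_zero
    have : 0 < (1 - Real.exp (-c)) / c := div_pos (by linarith) hc0
    rw [sub_div] at this
    linarith
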